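/- Let P be a symmetric positive definite n×n real matrix, s > 0, ū > 0, and h ∈ ℝⁿ. Then the ellipsoid {x ∈ ℝⁿ : xᵀPx ≤ s²} is contained in the slab {x ∈ ℝⁿ : |hᵀx| ≤ ū} if and only if the matrix (ū²/s²)·P − h·hᵀ is positive semidefinite, where h·hᵀ denotes the rank-one outer product. -/

import Mathlib

open Matrix

private lemma quad_vecMulVec {n : ℕ} (h x : Fin n → ℝ) :
    x ⬝ᵥ (vecMulVec h h) *ᵥ x = (h ⬝ᵥ x) ^ 2 := by
  simp only [mulVec, dotProduct, vecMulVec_apply, Finset.mul_sum]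
  rw [sq, Finset.sum_mul_sum]
  exact Finset.sum_congr rfl fun i _ => Finset.sum_congr rfl fun j _ => by ring

private lemma quad_expand {n : ℕ} (P : Matrix (Fin n) (Fin n) ℝ) (c : ℝ) (h x : Fin n → ℝ) :
    x ⬝ᵥ (c • P - vecMulVec h h) *ᵥ x = c * (x ⬝ᵥ P *ᵥ x) - (h ⬝ᵥ x) ^ 2 := by
  rw [sub_mulVec, dotProduct_sub, quad_vecMulVec, smul_mulVec, dotProduct_smul,
    smul_eq_mul]

/-- For a symmetric positive definite `P`, `s > 0`, `ū > 0` and `h ∈ ℝⁿ`,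
the ellipsoid `{x : xᵀPx ≤ s²}` is contained in the slab `{x : |hᵀx| ≤ ū}` iff
`(ū²/s²)·P − h·hᵀ` is positive semidefinite. -/
theorem ellipsoid_subset_slab_iff_posSemidef (n : ℕ) (P : Matrix (Fin n) (Fin n) ℝ)
    (hP : P.PosDef) (s ubar : ℝ) (hs : 0 < s) (hubar : 0 < ubar) (h : Fin n → ℝ) :
    {x : Fin n → ℝ | x ⬝ᵥ P *ᵥ x ≤ s ^ 2} ⊆ {x : Fin n → ℝ | |h ⬝ᵥ x| ≤ ubar} ↔
      ((ubar ^ 2 / s ^ 2) • P - vecMulVec h h).PosSemidef := by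
  have hHerm : ((ubar ^ 2 / s ^ 2) • P - vecMulVec h h).IsHermitian := by
    apply IsHermitian.sub
    · unfold Matrix.IsHermitian
      ext i j
      simp only [conjTranspose_apply, Matrix.smul_apply, star, smul_eq_mul]
      rw [← hP.isHermitian.apply j i]
      simp
    · ext i j
      simp [conjTranspose_apply, vecMulVec_apply, mul_comm]
  constructor
  · intro hsub
    refine PosSemidef.of_dotProduct_mulVec_nonneg hHerm fun x => ?_
    rw [show star x = x by simp, quad_expand]
    set q := x ⬝ᵥ P *ᵥ x with hq
    rcases eq_or_ne x 0 with rfl | hx0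
    · simp [hq, dotProduct]
    · have hqpos : 0 < q := hP.dotProduct_mulVec_pos hx0
      set t : ℝ := s / Real.sqrt q with ht
      have hsq : Real.sqrt q ^ 2 = q := Real.sq_sqrt hqpos.le
      have hsqpos : 0 < Real.sqrt q := Real.sqrt_pos.mpr hqpos
      have hmem : (t • x) ∈ {y : Fin n → ℝ | y ⬝ᵥ P *ᵥ y ≤ s ^ 2} := by
        simp only [Set.mem_setOf_eq, mulVec_smul, smul_dotProduct, dotProduct_smul,
          smul_eq_mul]
        rw [← hq]
        have : t * (t * q) = s ^ 2 := by
          rw [ht, ← mul_assoc, ← sq, div_pow, hsq]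
          exact div_mul_cancel₀ _ hqpos.ne'
        rw [this]
      have habs : |h ⬝ᵥ (t • x)| ≤ ubar := hsub hmem
      have hdp : h ⬝ᵥ (t • x) = t * (h ⬝ᵥ x) := by
        simp [dotProduct_smul]
      rw [hdp] at habs
      have hsq2 : (t * (h ⬝ᵥ x)) ^ 2 ≤ ubar ^ 2 := by
        nlinarith [abs_nonneg (t * (h ⬝ᵥ x)), sq_abs (t * (h ⬝ᵥ x))]
      have ht2 : t ^ 2 = s ^ 2 / q := by
        rw [ht, div_pow, hsq]
      have : s ^ 2 / q * (h ⬝ᵥ x) ^ 2 ≤ ubar ^ 2 := by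
        rw [← ht2]; nlinarith [hsq2]
      have hs2 : (0:ℝ) < s ^ 2 := by positivity
      have key : s ^ 2 * (h ⬝ᵥ x) ^ 2 ≤ ubar ^ 2 * q := by
        rw [div_mul_eq_mul_div, div_le_iff₀ hqpos] at this
        linarith
      rw [sub_nonneg, div_mul_eq_mul_div, le_div_iff₀ hs2]
      linarith
  · intro hpsd x hx
    have := hpsd.dotProduct_mulVec_nonneg x
    have hx2 : (star x) ⬝ᵥ ((ubar ^ 2 / s ^ 2) • P - vecMulVec h h) *ᵥ x
        = (ubar ^ 2 / s ^ 2) * (x ⬝ᵥ P *ᵥ x) - (h ⬝ᵥ x) ^ 2 := by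
      rw [show (star x) = x by simp, quad_expand]
    rw [hx2] at this
    have hs2 : (0:ℝ) < s ^ 2 := by positivity
    have hq0 : 0 ≤ x ⬝ᵥ P *ᵥ x := by
      have := hP.posSemidef.dotProduct_mulVec_nonneg x
      simpa using this
    have hxle : x ⬝ᵥ P *ᵥ x ≤ s ^ 2 := hx
    have hb : (h ⬝ᵥ x) ^ 2 ≤ ubar ^ 2 := by
      have hdiv : (ubar ^ 2 / s ^ 2) * (x ⬝ᵥ P *ᵥ x) ≤ ubar ^ 2 := by
        rw [div_mul_eq_mul_div, div_le_iff₀ hs2]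
        nlinarith
      linarith
    exact abs_le_of_sq_le_sq hb hubar.le
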